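/- A symplectic R^(2)-module of finite (R^(2), R)-dimension (n', m') must have both n' and m' even: there exist non-negative integers n, m with n' = 2n and m' = 2m. -/

import Mathlib

open DualNumber Matrix

lemma even_of_skew_nondeg (n : ℕ) (M : Matrix (Fin n) (Fin n) ℝ) (hskew : Mᵀ = -M)
    (hnd : ∀ v, M.mulVec v = 0 → v = 0) : Even n := by
  have hdet : M.det ≠ 0 := by
    intro h
    obtain ⟨v, hv, hv0⟩ := Matrix.exists_mulVec_eq_zero_iff.mpr h
    exact hv (hnd v hv0)
  rcases Nat.even_or_odd n with h | h
  · exact h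
  · exfalso
    have hh : M.det = -M.det := by
      conv_lhs => rw [← Matrix.det_transpose, hskew, Matrix.det_neg]
      simp [Fintype.card_fin, Odd.neg_one_pow h]
    have := sub_eq_zero.mpr hh; simp at this; exact hdet (by linarith)


/-- a symplectic `ℝ⁽²⁾`-module (with a Hu-Liu symplectic form
`ω`) of finite `(ℝ⁽²⁾, ℝ)`-dimension `(n', m')` has both `n'` and `m'` even. -/
theorem symplectic_dim_even (V : Type*) [AddCommGroup V] [Module (DualNumber ℝ) V]
    (ω : V → V → DualNumber ℝ)
    -- (i) additivity in the first argument
    (h1 : ∀ x y z : V, ω (x + y) z = ω x z + ω y z)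
    -- (ii) ℝ⁽²⁾-homogeneity in the first argument
    (h2 : ∀ (a : DualNumber ℝ) (x y : V), ω (a • x) y = a * ω x y)
    -- (iii) antisymmetry
    (h3 : ∀ x y : V, ω x y = -ω y x)
    -- (iv) if `Re ω(v,x) = 0` for all `x` then `v ∈ Ker 1#`
    (h4 : ∀ v : V, (∀ x : V, TrivSqZeroExt.fst (ω v x) = 0) → (ε : DualNumber ℝ) • v = 0)
    -- (v) if `v ∈ Ker 1#` and `ω(v,·) = 0` then `v ∈ Im 1#`
    (h5 : ∀ v : V, (ε : DualNumber ℝ) • v = 0 → (∀ x : V, ω v x = 0) →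
      ∃ w : V, v = (ε : DualNumber ℝ) • w)
    -- a finite `(ℝ⁽²⁾, ℝ)`-basis of dimension `(n', m')`
    (n' m' : ℕ) (e : Fin n' → V) (f : Fin m' → V)
    (hker : ∀ j, (ε : DualNumber ℝ) • f j = 0)
    (hindep : ∀ (c : Fin n' → DualNumber ℝ) (d : Fin m' → ℝ),
      ∑ i, c i • e i + ∑ j, algebraMap ℝ (DualNumber ℝ) (d j) • f j = 0 →
      c = 0 ∧ d = 0)
    (hspan : ∀ v : V, ∃ (c : Fin n' → DualNumber ℝ) (d : Fin m' → ℝ),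
      v = ∑ i, c i • e i + ∑ j, algebraMap ℝ (DualNumber ℝ) (d j) • f j) :
    ∃ n m : ℕ, n' = 2 * n ∧ m' = 2 * m := by
  classical
  have fst_alg : ∀ d : ℝ, TrivSqZeroExt.fst (algebraMap ℝ (DualNumber ℝ) d) = d := fun _ => rfl
  have snd_alg : ∀ d : ℝ, TrivSqZeroExt.snd (algebraMap ℝ (DualNumber ℝ) d) = 0 := fun _ => rfl
  have hω0 : ∀ x : V, ω 0 x = 0 := fun x => by
    have := h2 0 x x; simpa using this
  have hω0' : ∀ x : V, ω x 0 = 0 := fun x => by rw [h3, hω0, neg_zero]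
  have h1' : ∀ x y z : V, ω x (y + z) = ω x y + ω x z := fun x y z => by
    rw [h3, h1, h3 y x, h3 z x]; ring
  have h2' : ∀ (a : DualNumber ℝ) (x y : V), ω x (a • y) = a * ω x y := fun a x y => by
    rw [h3, h2, h3 y x]; ring
  let L1 : V → V →+ DualNumber ℝ := fun x => AddMonoidHom.mk' (fun v => ω v x)
    (fun a b => h1 a b x)
  let L2 : V → V →+ DualNumber ℝ := fun x => AddMonoidHom.mk' (fun v => ω x v)
    (fun a b => h1' x a b)
  have hsum1 : ∀ {k : ℕ} (g : Fin k → V) (x : V), ω (∑ i, g i) x = ∑ i, ω (g i) x :=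
    fun g x => map_sum (L1 x) g Finset.univ
  have hsum2 : ∀ {k : ℕ} (g : Fin k → V) (x : V), ω x (∑ i, g i) = ∑ i, ω x (g i) :=
    fun g x => map_sum (L2 x) g Finset.univ
  have hsub1 : ∀ x y z : V, ω (x - y) z = ω x z - ω y z := fun x y z =>
    map_sub (L1 z) x y
  have expand1 : ∀ {k : ℕ} (g : Fin k → ℝ) (vv : Fin k → V) (x : V),
      ω (∑ j, algebraMap ℝ (DualNumber ℝ) (g j) • vv j) x
        = ∑ j, algebraMap ℝ (DualNumber ℝ) (g j) * ω (vv j) x :=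
    fun g vv x => by rw [hsum1]; exact Finset.sum_congr rfl fun j _ => h2 _ _ _
  have hfst : ∀ v : V, (ε : DualNumber ℝ) • v = 0 →
      ∀ x : V, TrivSqZeroExt.fst (ω v x) = 0 := by
    intro v hv x
    have h : (ε : DualNumber ℝ) * ω v x = 0 := by rw [← h2, hv, hω0]
    have := congrArg TrivSqZeroExt.snd h
    simpa [TrivSqZeroExt.snd_mul] using this
  -- expansion of ω v x over the basis
  have expand2 : ∀ (v x : V), ∃ (c : Fin n' → DualNumber ℝ) (d : Fin m' → ℝ),
      ω v x = ∑ i, c i * ω v (e i) + ∑ j, algebraMap ℝ (DualNumber ℝ) (d j) * ω v (f j) := by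
    intro v x
    obtain ⟨c, d, hx⟩ := hspan x
    refine ⟨c, d, ?_⟩
    rw [hx, h1', hsum2, hsum2]
    congr 1
    · exact Finset.sum_congr rfl fun i _ => h2' (c i) v (e i)
    · exact Finset.sum_congr rfl fun j _ => h2' _ v (f j)
  have vanish : ∀ v : V, (∀ i, ω v (e i) = 0) → (∀ j, ω v (f j) = 0) →
      ∀ x : V, ω v x = 0 := by
    intro v he hf x
    obtain ⟨c, d, hvx⟩ := expand2 v x
    rw [hvx]
    simp [he, hf]
  have fst_vanish : ∀ v : V, (∀ i, TrivSqZeroExt.fst (ω v (e i)) = 0) →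
      (∀ j, TrivSqZeroExt.fst (ω v (f j)) = 0) →
      ∀ x : V, TrivSqZeroExt.fst (ω v x) = 0 := by
    intro v he hf x
    obtain ⟨c, d, hvx⟩ := expand2 v x
    rw [hvx, TrivSqZeroExt.fst_add, TrivSqZeroExt.fst_sum, TrivSqZeroExt.fst_sum,
      Finset.sum_eq_zero fun i _ => by rw [TrivSqZeroExt.fst_mul, he i, mul_zero],
      Finset.sum_eq_zero fun j _ => by rw [TrivSqZeroExt.fst_mul, hf j, mul_zero]]
    simp
  -- the matrix on the e's
  set M : Matrix (Fin n') (Fin n') ℝ :=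
    Matrix.of fun i j => TrivSqZeroExt.fst (ω (e i) (e j)) with hM
  have hMapp : ∀ i j, M i j = TrivSqZeroExt.fst (ω (e i) (e j)) := fun i j => rfl
  have hMskew : Mᵀ = -M := by
    ext i j
    rw [Matrix.transpose_apply, Matrix.neg_apply, hMapp, hMapp, h3]
    simp
  have fst_comb : ∀ (g : Fin n' → ℝ) (x : V),
      TrivSqZeroExt.fst (ω (∑ j, algebraMap ℝ (DualNumber ℝ) (g j) • e j) x)
        = ∑ j, g j * TrivSqZeroExt.fst (ω (e j) x) := by
    intro g x
    rw [expand1, TrivSqZeroExt.fst_sum]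
    exact Finset.sum_congr rfl fun j _ => by rw [TrivSqZeroExt.fst_mul, fst_alg]
  have fst_comb_e : ∀ (g : Fin n' → ℝ) (i : Fin n'),
      TrivSqZeroExt.fst (ω (∑ j, algebraMap ℝ (DualNumber ℝ) (g j) • e j) (e i))
        = -(M.mulVec g i) := by
    intro g i
    rw [fst_comb]
    have hT : (Mᵀ).mulVec g i = ∑ j, g j * M j i := by
      simp [Matrix.mulVec, dotProduct, mul_comm]
    rw [show ∑ j, g j * TrivSqZeroExt.fst (ω (e j) (e i)) = ∑ j, g j * M j i from rfl,
      ← hT, hMskew]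
    simp [Matrix.mulVec, dotProduct]
  have eps_f_comb : ∀ (g : Fin m' → ℝ),
      (ε : DualNumber ℝ) • (∑ j, algebraMap ℝ (DualNumber ℝ) (g j) • f j) = 0 := by
    intro g
    rw [Finset.smul_sum]
    refine Finset.sum_eq_zero fun j _ => ?_
    rw [smul_smul, mul_comm, ← smul_smul, hker, smul_zero]
  -- nondegeneracy of M
  have hMnd : ∀ c : Fin n' → ℝ, M.mulVec c = 0 → c = 0 := by
    intro c hc
    set v : V := ∑ j, algebraMap ℝ (DualNumber ℝ) (c j) • e j with hv
    have hve : ∀ i, TrivSqZeroExt.fst (ω v (e i)) = 0 := by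
      intro i; rw [hv, fst_comb_e, hc]; simp
    have hvf : ∀ j, TrivSqZeroExt.fst (ω v (f j)) = 0 := by
      intro j; rw [h3, TrivSqZeroExt.fst_neg, hfst (f j) (hker j) v, neg_zero]
    have hεv : (ε : DualNumber ℝ) • v = 0 := h4 v (fst_vanish v hve hvf)
    have hεv' : ∑ i, ((ε : DualNumber ℝ) * algebraMap ℝ (DualNumber ℝ) (c i)) • e i
        + ∑ j, algebraMap ℝ (DualNumber ℝ) ((0 : Fin m' → ℝ) j) • f j = 0 := by
      have heq : (ε : DualNumber ℝ) • v
          = ∑ i, ((ε : DualNumber ℝ) * algebraMap ℝ (DualNumber ℝ) (c i)) • e i := by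
        rw [hv, Finset.smul_sum]
        exact Finset.sum_congr rfl fun i _ => smul_smul _ _ _
      rw [← heq, hεv]
      simp
    obtain ⟨hc0, -⟩ := hindep _ _ hεv'
    funext i
    have h' := congrArg TrivSqZeroExt.snd (congrFun hc0 i)
    simpa [TrivSqZeroExt.snd_mul, fst_alg] using h'
  have hn : Even n' := even_of_skew_nondeg n' M hMskew hMnd
  -- the matrix on the f's
  set N : Matrix (Fin m') (Fin m') ℝ :=
    Matrix.of fun i j => TrivSqZeroExt.snd (ω (f i) (f j)) with hN
  have hNapp : ∀ i j, N i j = TrivSqZeroExt.snd (ω (f i) (f j)) := fun i j => rfl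
  have hNskew : Nᵀ = -N := by
    ext i j
    rw [Matrix.transpose_apply, Matrix.neg_apply, hNapp, hNapp, h3]
    simp
  have hNnd : ∀ d : Fin m' → ℝ, N.mulVec d = 0 → d = 0 := by
    intro d hd
    set u : V := ∑ k, algebraMap ℝ (DualNumber ℝ) (d k) • f k with hu
    have hεu : (ε : DualNumber ℝ) • u = 0 := eps_f_comb d
    have hufst : ∀ x, TrivSqZeroExt.fst (ω u x) = 0 := hfst u hεu
    have huf : ∀ j, ω u (f j) = 0 := by
      intro j
      apply TrivSqZeroExt.ext
      · rw [hufst]; rfl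
      · rw [hu, expand1, TrivSqZeroExt.snd_sum,
          Finset.sum_congr rfl fun k _ => show TrivSqZeroExt.snd
              (algebraMap ℝ (DualNumber ℝ) (d k) * ω (f k) (f j)) = d k * N k j by
            rw [TrivSqZeroExt.snd_mul]; simp [fst_alg, snd_alg, hNapp]]
        have hT : (Nᵀ).mulVec d j = ∑ k, d k * N k j := by
          simp [Matrix.mulVec, dotProduct, mul_comm]
        rw [← hT, hNskew]
        have hdj := congrFun hd j
        simp only [Matrix.mulVec, dotProduct, Pi.zero_apply] at hdj ⊢
        simp [hdj]
    -- solve for w with fst ω(w, e i) = snd ω(u, e i)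
    set s : Fin n' → ℝ := fun i => TrivSqZeroExt.snd (ω u (e i)) with hs
    have hinj : Function.Injective M.mulVecLin :=
      (injective_iff_map_eq_zero M.mulVecLin).mpr fun a h => hMnd a (by simpa using h)
    have hsurj : Function.Surjective M.mulVecLin :=
      LinearMap.injective_iff_surjective.mp hinj
    obtain ⟨b, hb⟩ := hsurj (-s)
    set w : V := ∑ j, algebraMap ℝ (DualNumber ℝ) (b j) • e j with hw
    have hwfst : ∀ i, TrivSqZeroExt.fst (ω w (e i)) = s i := by
      intro i
      rw [hw, fst_comb_e]
      have hbi := congrFun hb i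
      simp only [Matrix.mulVecLin_apply] at hbi
      rw [hbi]
      simp
    set u' : V := u - (ε : DualNumber ℝ) • w with hu'
    have hεu' : (ε : DualNumber ℝ) • u' = 0 := by
      rw [hu', smul_sub, hεu, smul_smul, DualNumber.eps_mul_eps, zero_smul, sub_zero]
    have hu'x : ∀ x, ω u' x = ω u x - (ε : DualNumber ℝ) * ω w x := fun x => by
      rw [hu', hsub1, h2]
    have hu'e : ∀ i, ω u' (e i) = 0 := by
      intro i
      apply TrivSqZeroExt.ext
      · rw [hu'x, TrivSqZeroExt.fst_sub, hufst]
        simp [TrivSqZeroExt.fst_mul]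
      · rw [hu'x, TrivSqZeroExt.snd_sub]
        have : TrivSqZeroExt.snd ((ε : DualNumber ℝ) * ω w (e i)) =
            TrivSqZeroExt.fst (ω w (e i)) := by
          simp [TrivSqZeroExt.snd_mul]
        rw [this, hwfst]
        simp [hs]
    have hu'f : ∀ j, ω u' (f j) = 0 := by
      intro j
      have hwfj : TrivSqZeroExt.fst (ω w (f j)) = 0 := by
        rw [h3, TrivSqZeroExt.fst_neg, hfst (f j) (hker j) w, neg_zero]
      apply TrivSqZeroExt.ext
      · rw [hu'x, TrivSqZeroExt.fst_sub, hufst]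
        simp [TrivSqZeroExt.fst_mul]
      · rw [hu'x, TrivSqZeroExt.snd_sub, huf j]
        have : TrivSqZeroExt.snd ((ε : DualNumber ℝ) * ω w (f j)) =
            TrivSqZeroExt.fst (ω w (f j)) := by
          simp [TrivSqZeroExt.snd_mul]
        rw [this, hwfj]
        simp
    obtain ⟨w'', hw''⟩ := h5 u' hεu' (vanish u' hu'e hu'f)
    have huy : u = (ε : DualNumber ℝ) • (w'' + w) := by
      rw [smul_add, ← hw'', hu']
      abel
    obtain ⟨C, D, hy⟩ := hspan (w'' + w)
    have hey : (ε : DualNumber ℝ) • (w'' + w)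
        = ∑ i, ((ε : DualNumber ℝ) * C i) • e i := by
      rw [hy, smul_add, Finset.smul_sum,
        Finset.sum_congr rfl fun i _ => smul_smul (ε : DualNumber ℝ) (C i) (e i),
        eps_f_comb, add_zero]
    have hfinal : ∑ i, (-((ε : DualNumber ℝ) * C i)) • e i
        + ∑ k, algebraMap ℝ (DualNumber ℝ) (d k) • f k = 0 := by
      have hneg : ∑ i, (-((ε : DualNumber ℝ) * C i)) • e i
          = -∑ i, ((ε : DualNumber ℝ) * C i) • e i := by
        simp [neg_smul]
      rw [hneg, ← hu, huy, hey]
      abel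
    obtain ⟨-, hd0⟩ := hindep _ _ hfinal
    exact hd0
  have hm : Even m' := even_of_skew_nondeg m' N hNskew hNnd
  obtain ⟨n, hn'⟩ := hn
  obtain ⟨m, hm'⟩ := hm
  exact ⟨n, m, by omega, by omega⟩
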